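/- Let Γ be a strongly connected digraph, ℓ an embedded directed loop, and Γ' the digraph obtained by collapsing ℓ. Then there is a short exact sequence 0 → ℚ·ℓ → L(Γ) → L(Γ') → 0 of loop spaces; in particular dim L(Γ) = dim L(Γ') + 1. -/

import Mathlib

open scoped Classical

/-- A digraph: a finite set of vertices and a finite (multi)set of directed edges,
each with a tail and a tip. Multiple edges and self-loops are allowed. -/
structure Digraph' where
  V : Type
  E : Type
  [fintypeV : Fintype V]
  [fintypeE : Fintype E]
  tail : E → V
  tip : E → V

attribute [instance] Digraph'.fintypeV Digraph'.fintypeE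

/-- One-step relation: there is an edge from `a` to `b`. -/
def Digraph'.Step (G : Digraph') (a b : G.V) : Prop :=
  ∃ e : G.E, G.tail e = a ∧ G.tip e = b

/-- Strong connectivity: for all vertices `x`, `y` there is a (nonempty) directed
path from `x` to `y`. -/
def Digraph'.StronglyConnected (G : Digraph') : Prop :=
  ∀ x y : G.V, Relation.TransGen G.Step x y

/-- An embedded directed loop with `n` edges. -/
def Digraph'.IsEmbeddedLoop (G : Digraph') {n : ℕ} [NeZero n] (e : ZMod n → G.E) : Prop :=
  Function.Injective e ∧ Function.Injective (fun i => G.tail (e i)) ∧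
    ∀ i, G.tip (e i) = G.tail (e (i + 1))

/-- The element of `ℚ^E` obtained from an embedded loop by summing its edges. -/
noncomputable def Digraph'.loopVec (G : Digraph') {n : ℕ} [NeZero n] (e : ZMod n → G.E) :
    G.E → ℚ :=
  Set.indicator (Set.range e) fun _ => (1 : ℚ)

/-- The loop space `L(Γ) ⊆ ℚ^E`. -/
noncomputable def Digraph'.loopSpace (G : Digraph') : Submodule ℚ (G.E → ℚ) :=
  Submodule.span ℚ
    {v | ∃ (n : ℕ) (_ : NeZero n) (e : ZMod n → G.E), G.IsEmbeddedLoop e ∧ v = G.loopVec e}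

/-- The set of vertices visited by a loop. -/
def Digraph'.loopVerts (G : Digraph') {n : ℕ} [NeZero n] (e : ZMod n → G.E) : Set G.V :=
  Set.range fun i => G.tail (e i)

/-- The digraph obtained by collapsing an embedded loop `e` to a single vertex. -/
noncomputable def Digraph'.collapse (G : Digraph') {n : ℕ} [NeZero n] (e : ZMod n → G.E) :
    Digraph' where
  V := Option {v : G.V // v ∉ G.loopVerts e}
  E := {f : G.E // f ∉ Set.range e}
  tail := fun f =>
    if h : G.tail f.1 ∈ G.loopVerts e then none else some ⟨G.tail f.1, h⟩
  tip := fun f =>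
    if h : G.tip f.1 ∈ G.loopVerts e then none else some ⟨G.tip f.1, h⟩

/-- The linear map `ℚ^E → ℚ^{E'}` induced by the quotient map on edges (restriction to
the edges not in the collapsed loop). -/
noncomputable def Digraph'.collapseMap (G : Digraph') {n : ℕ} [NeZero n] (e : ZMod n → G.E) :
    (G.E → ℚ) →ₗ[ℚ] ((G.collapse e).E → ℚ) :=
  LinearMap.funLeft ℚ ℚ fun f => f.1
namespace Digraph'

variable (G : Digraph')

/-- The boundary (incidence) map `ℚ^E → ℚ^V`. -/
noncomputable def bnd : (G.E → ℚ) →ₗ[ℚ] (G.V → ℚ) where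
  toFun x v := ∑ g, x g * ((if G.tip g = v then (1:ℚ) else 0) - (if G.tail g = v then 1 else 0))
  map_add' x y := by
    funext v
    simp only [Pi.add_apply, add_mul, Finset.sum_add_distrib]
  map_smul' a x := by
    funext v
    simp only [Pi.smul_apply, smul_eq_mul, RingHom.id_apply, Finset.mul_sum, mul_assoc]

lemma bnd_apply (x : G.E → ℚ) (v : G.V) :
    G.bnd x v = ∑ g, x g * ((if G.tip g = v then (1:ℚ) else 0) - (if G.tail g = v then 1 else 0)) :=
  rfl

lemma bnd_single (g : G.E) (a : ℚ) (v : G.V) :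
    G.bnd (Pi.single g a) v
      = a * ((if G.tip g = v then (1:ℚ) else 0) - (if G.tail g = v then 1 else 0)) := by
  rw [bnd_apply]
  rw [Finset.sum_eq_single g]
  · simp
  · intro b _ hb; simp [Pi.single_apply, hb]
  · simp

variable {G}

/-- Sum over the range of an injective function on a fintype. -/
lemma sum_range_inj {n : ℕ} [NeZero n] {e : ZMod n → G.E} (hinj : Function.Injective e)
    (h : G.E → ℚ) :
    ∑ f, (Set.indicator (Set.range e) (fun _ => (1:ℚ)) f) * h f = ∑ i, h (e i) := by
  classical
  have : ∀ f, (Set.indicator (Set.range e) (fun _ => (1:ℚ)) f) * h f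
      = if f ∈ Finset.image e Finset.univ then h f else 0 := by
    intro f
    by_cases hf : f ∈ Set.range e
    · rw [Set.indicator_of_mem hf]
      have : f ∈ Finset.image e Finset.univ := by
        obtain ⟨i, hi⟩ := hf
        exact Finset.mem_image.2 ⟨i, Finset.mem_univ i, hi⟩
      simp [this]
    · rw [Set.indicator_of_notMem hf]
      have : f ∉ Finset.image e Finset.univ := by
        simpa [Finset.mem_image] using fun i => fun hh => hf ⟨i, hh⟩
      simp [this]
  rw [Finset.sum_congr rfl (fun f _ => this f), Finset.sum_ite_mem,
    Finset.univ_inter, Finset.sum_image (fun a _ b _ h => hinj h)]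

lemma bnd_loopVec {n : ℕ} [NeZero n] {e : ZMod n → G.E} (he : G.IsEmbeddedLoop e) :
    G.bnd (G.loopVec e) = 0 := by
  funext v
  rw [bnd_apply, Pi.zero_apply]
  unfold loopVec
  rw [sum_range_inj he.1]
  have : ∀ i : ZMod n, ((if G.tip (e i) = v then (1:ℚ) else 0) - (if G.tail (e i) = v then 1 else 0))
      = (if G.tail (e (i+1)) = v then (1:ℚ) else 0) - (if G.tail (e i) = v then 1 else 0) := by
    intro i; rw [he.2.2 i]
  rw [Finset.sum_congr rfl (fun i _ => this i), Finset.sum_sub_distrib]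
  have : (∑ i : ZMod n, if G.tail (e (i+1)) = v then (1:ℚ) else 0)
      = ∑ i : ZMod n, if G.tail (e i) = v then (1:ℚ) else 0 :=
    Fintype.sum_equiv (Equiv.addRight (1 : ZMod n)) _ _ (fun i => rfl)
  rw [this]; ring

lemma sum_loopVec {n : ℕ} [NeZero n] {e : ZMod n → G.E} (he : G.IsEmbeddedLoop e) :
    ∑ f, G.loopVec e f = (n : ℚ) := by
  have h := sum_range_inj he.1 (fun _ => (1:ℚ))
  simp only [mul_one] at h
  unfold loopVec
  rw [h]
  simp [ZMod.card]

lemma loopVec_mem (n : ℕ) [NeZero n] (e : ZMod n → G.E) (he : G.IsEmbeddedLoop e) :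
    G.loopVec e ∈ G.loopSpace :=
  Submodule.subset_span ⟨n, ‹_›, e, he, rfl⟩

end Digraph'
namespace Digraph'

variable {G : Digraph'}

lemma exists_out (x : G.E → ℚ) (hb : G.bnd x = 0) (hnn : ∀ f, 0 ≤ x f)
    (g : G.E) (hg : 0 < x g) : ∃ g', G.tail g' = G.tip g ∧ 0 < x g' := by
  by_contra hcon
  push_neg at hcon
  set v := G.tip g with hv
  have h0 : G.bnd x v = 0 := by rw [hb]; rfl
  rw [bnd_apply] at h0
  have hsplit : ∀ f, x f * ((if G.tip f = v then (1:ℚ) else 0) - (if G.tail f = v then 1 else 0))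
      = x f * (if G.tip f = v then (1:ℚ) else 0) := by
    intro f
    by_cases ht : G.tail f = v
    · have : x f = 0 := le_antisymm (hcon f ht) (hnn f)
      simp [this]
    · simp [ht]
  rw [Finset.sum_congr rfl (fun f _ => hsplit f)] at h0
  have hge : x g ≤ ∑ f, x f * (if G.tip f = v then (1:ℚ) else 0) := by
    have := Finset.single_le_sum (f := fun f => x f * (if G.tip f = v then (1:ℚ) else 0))
      (fun f _ => mul_nonneg (hnn f) (by split <;> norm_num)) (Finset.mem_univ g)
    simpa [← hv] using this
  linarith

lemma zmod_val_inj {n : ℕ} [NeZero n] {m1 m2 : ZMod n} (h : m1.val = m2.val) : m1 = m2 := by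
  rw [← ZMod.natCast_rightInverse m1, ← ZMod.natCast_rightInverse m2, h]

lemma extract_loop (x : G.E → ℚ) (hb : G.bnd x = 0) (hnn : ∀ f, 0 ≤ x f)
    (f0 : G.E) (h0 : 0 < x f0) :
    ∃ (n : ℕ) (_ : NeZero n) (e : ZMod n → G.E), G.IsEmbeddedLoop e ∧ ∀ i, 0 < x (e i) := by
  classical
  let next : {g : G.E // 0 < x g} → {g : G.E // 0 < x g} := fun g =>
    ⟨(exists_out x hb hnn g.1 g.2).choose, (exists_out x hb hnn g.1 g.2).choose_spec.2⟩
  set F : ℕ → {g : G.E // 0 < x g} := fun m => next^[m] ⟨f0, h0⟩ with hFdef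
  have hF : ∀ m, G.tail (F (m+1)).1 = G.tip (F m).1 := by
    intro m
    have h1 : F (m+1) = next (F m) := Function.iterate_succ_apply' next m _
    rw [h1]
    exact (exists_out x hb hnn (F m).1 (F m).2).choose_spec.1
  set t : ℕ → G.V := fun m => G.tail (F m).1 with ht
  have hS : ∃ d, 0 < d ∧ ∃ i, t (i + d) = t i := by
    obtain ⟨a, b, hab, heq⟩ := Finite.exists_ne_map_eq_of_infinite t
    rcases lt_or_gt_of_ne hab with h | h
    · exact ⟨b - a, by omega, a, by rw [show a + (b-a) = b by omega, heq]⟩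
    · exact ⟨a - b, by omega, b, by rw [show b + (a-b) = a by omega, ← heq]⟩
  set n := Nat.find hS with hn
  obtain ⟨hnpos, i, hi⟩ := Nat.find_spec hS
  haveI : NeZero n := ⟨hnpos.ne'⟩
  have key : ∀ p q : ℕ, p < q → q - p < n → t p ≠ t q := by
    intro p q hpq hlt habs
    exact Nat.find_min hS hlt ⟨by omega, p, by rw [show p + (q - p) = q by omega]; exact habs.symm⟩
  have tinj : Function.Injective (fun m : ZMod n => G.tail ((F (i + m.val)).1)) := by
    intro m1 m2 h12
    simp only at h12
    by_contra hne
    have hvne : m1.val ≠ m2.val := fun h => hne (zmod_val_inj h)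
    rcases lt_or_gt_of_ne hvne with h | h
    · exact key (i + m1.val) (i + m2.val) (by omega)
        (by have := ZMod.val_lt m2; omega) h12
    · exact key (i + m2.val) (i + m1.val) (by omega)
        (by have := ZMod.val_lt m1; omega) h12.symm
  refine ⟨n, ‹_›, fun m => (F (i + m.val)).1, ⟨?_, tinj, ?_⟩, fun m => (F (i + m.val)).2⟩
  · intro m1 m2 h12
    exact tinj (by simp only [h12])
  · intro m
    have hval : (m + 1).val = (m.val + 1) % n := by
      have hm : ((m.val + 1 : ℕ) : ZMod n) = m + 1 := by
        rw [Nat.cast_add, Nat.cast_one, ZMod.natCast_rightInverse m]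
      rw [← hm, ZMod.val_natCast]
    have h1 : G.tip (F (i + m.val)).1 = t (i + m.val + 1) := (hF (i + m.val)).symm
    show G.tip (F (i + m.val)).1 = t (i + (m+1).val)
    rw [h1, hval]
    rcases Nat.lt_or_ge (m.val + 1) n with hlt | hge
    · rw [Nat.mod_eq_of_lt hlt]
      exact congrArg t (by omega)
    · have hveq : m.val + 1 = n := by have := ZMod.val_lt m; omega
      rw [hveq, Nat.mod_self, Nat.add_zero, show i + m.val + 1 = i + n by omega, hi]
      exact congrArg t (by omega)

lemma decomp (s : ℕ) : ∀ (x : G.E → ℚ), (∀ f, ∃ m : ℕ, x f = m) → G.bnd x = 0 →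
    ∑ f, x f = (s : ℚ) → x ∈ G.loopSpace := by
  induction s using Nat.strong_induction_on with
  | _ s ih =>
    intro x hint hb hsum
    by_cases hzero : ∀ f, x f = 0
    · have hx : x = 0 := funext hzero
      rw [hx]; exact Submodule.zero_mem _
    · push_neg at hzero
      obtain ⟨f0, hf0⟩ := hzero
      have hnn : ∀ f, 0 ≤ x f := fun f => by
        obtain ⟨m, hm⟩ := hint f; rw [hm]; positivity
      have h0 : 0 < x f0 := lt_of_le_of_ne (hnn f0) (Ne.symm hf0)
      obtain ⟨n, hne, e, he, hpos⟩ := extract_loop x hb hnn f0 h0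
      have hone : ∀ f ∈ Set.range e, 1 ≤ x f := by
        rintro f ⟨j, rfl⟩
        obtain ⟨m, hm⟩ := hint (e j)
        have := hpos j
        rw [hm] at this ⊢
        exact_mod_cast this
      set x' := x - G.loopVec e with hx'
      have hint' : ∀ f, ∃ m : ℕ, x' f = m := by
        intro f
        by_cases hf : f ∈ Set.range e
        · obtain ⟨m, hm⟩ := hint f
          have hm1 : 1 ≤ m := by
            have := hone f hf; rw [hm] at this; exact_mod_cast this
          refine ⟨m - 1, ?_⟩
          have : x' f = x f - 1 := by
            simp [hx', loopVec, Set.indicator_of_mem hf]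
          rw [this, hm]
          push_cast [Nat.cast_sub hm1]
          ring
        · refine ⟨(hint f).choose, ?_⟩
          have : x' f = x f := by
            simp [hx', loopVec, Set.indicator_of_notMem hf]
          rw [this]; exact (hint f).choose_spec
      have hb' : G.bnd x' = 0 := by
        rw [hx', map_sub, hb, bnd_loopVec he, sub_zero]
      have hns : n ≤ s := by
        have hle : (n : ℚ) ≤ (s : ℚ) := by
          rw [← sum_loopVec he, ← hsum]
          apply Finset.sum_le_sum
          intro f _
          by_cases hf : f ∈ Set.range e
          · rw [loopVec, Set.indicator_of_mem hf]; exact hone f hf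
          · rw [loopVec, Set.indicator_of_notMem hf]; exact hnn f
        exact_mod_cast hle
      have hn1 : 1 ≤ n := Nat.pos_of_ne_zero hne.out
      have hsum' : ∑ f, x' f = ((s - n : ℕ) : ℚ) := by
        push_cast [Nat.cast_sub hns]
        simp only [hx', Pi.sub_apply, Finset.sum_sub_distrib, hsum, sum_loopVec he]
      have hmem' : x' ∈ G.loopSpace := ih (s - n) (by omega) x' hint' hb' hsum'
      have : x = x' + G.loopVec e := by rw [hx']; ring
      rw [this]
      exact Submodule.add_mem _ hmem' (loopVec_mem n e he)

end Digraph'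
namespace Digraph'

variable {G : Digraph'}

lemma path_vec {a b : G.V} (h : Relation.TransGen G.Step a b) :
    ∃ w : G.E → ℚ, (∀ f, ∃ m : ℕ, w f = m) ∧
      ∀ v, G.bnd w v = (if v = b then 1 else 0) - (if v = a then 1 else 0) := by
  induction h with
  | single hs =>
    obtain ⟨g, hg1, hg2⟩ := hs
    refine ⟨Pi.single g 1, ?_, ?_⟩
    · intro f
      by_cases hf : f = g
      · exact ⟨1, by subst hf; simp⟩
      · exact ⟨0, by simp [Pi.single_apply, hf]⟩
    · intro v
      rw [G.bnd_single, hg1, hg2, one_mul]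
      simp only [eq_comm]
  | tail _ hs ih =>
    obtain ⟨w1, hint1, hb1⟩ := ih
    obtain ⟨g, hg1, hg2⟩ := hs
    refine ⟨w1 + Pi.single g 1, ?_, ?_⟩
    · intro f
      obtain ⟨m, hm⟩ := hint1 f
      by_cases hf : f = g
      · refine ⟨m + 1, ?_⟩
        subst hf
        rw [Pi.add_apply, Pi.single_eq_same, hm]
        push_cast
        ring
      · exact ⟨m, by simp [Pi.single_apply, hf, hm]⟩
    · intro v
      rw [map_add, Pi.add_apply, hb1 v, G.bnd_single, hg1, hg2, one_mul]
      simp only [eq_comm]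
      ring

/-- Coverage: every edge lies on a nonnegative integer circulation. -/
lemma cov_of_sc (hG : G.StronglyConnected) (f : G.E) :
    ∃ c : G.E → ℚ, (∀ g, ∃ m : ℕ, c g = m) ∧ G.bnd c = 0 ∧ 1 ≤ c f := by
  obtain ⟨w, hint, hb⟩ := path_vec (hG (G.tip f) (G.tail f))
  refine ⟨w + Pi.single f 1, ?_, ?_, ?_⟩
  · intro g
    obtain ⟨m, hm⟩ := hint g
    by_cases hg : g = f
    · refine ⟨m + 1, ?_⟩
      subst hg
      rw [Pi.add_apply, Pi.single_eq_same, hm]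
      push_cast
      ring
    · exact ⟨m, by simp [Pi.single_apply, hg, hm]⟩
  · funext v
    rw [map_add, Pi.add_apply, hb v, G.bnd_single, one_mul, Pi.zero_apply]
    simp only [eq_comm]
    ring
  · have h0 : 0 ≤ w f := by obtain ⟨m, hm⟩ := hint f; rw [hm]; positivity
    simp only [Pi.add_apply, Pi.single_eq_same]
    linarith

lemma ker_le_loopSpace
    (cov : ∀ f : G.E, ∃ c : G.E → ℚ, (∀ g, ∃ m : ℕ, c g = m) ∧ G.bnd c = 0 ∧ 1 ≤ c f) :
    LinearMap.ker G.bnd ≤ G.loopSpace := by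
  intro x hx
  rw [LinearMap.mem_ker] at hx
  -- clear denominators
  set N : ℕ := ∏ f, (x f).den with hN
  have hNpos : 0 < N := Finset.prod_pos (fun f _ => (x f).pos)
  have hint : ∀ f, ∃ m : ℤ, (N : ℚ) * x f = m := by
    intro f
    obtain ⟨t, ht⟩ := Finset.dvd_prod_of_mem (fun f => (x f).den) (Finset.mem_univ f)
    refine ⟨t * (x f).num, ?_⟩
    rw [← hN] at ht
    rw [ht]
    push_cast
    calc ((x f).den : ℚ) * t * x f = t * (x f * (x f).den) := by ring
      _ = t * (x f).num := by rw [Rat.mul_den_eq_num]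
  set y : G.E → ℚ := (N : ℚ) • x with hy
  have hby : G.bnd y = 0 := by rw [hy, map_smul, hx, smul_zero]
  choose mz hmz using hint
  choose c hcint hcb hcf using cov
  set M : G.E → ℕ := fun f => (mz f).natAbs with hM
  set z : G.E → ℚ := y + ∑ f, (M f : ℚ) • c f with hz
  have hbz : G.bnd z = 0 := by
    rw [hz, map_add, hby, map_sum, zero_add]
    refine Finset.sum_eq_zero (fun f _ => ?_)
    rw [map_smul, hcb f, smul_zero]
  have hcnn : ∀ f g, 0 ≤ c f g := by
    intro f g
    obtain ⟨m, hm⟩ := hcint f g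
    rw [hm]; positivity
  have hznn : ∀ g, 0 ≤ z g := by
    intro g
    have hsum_ge : (M g : ℚ) * c g g ≤ ∑ f, (M f : ℚ) * c f g :=
      Finset.single_le_sum (f := fun f => (M f : ℚ) * c f g)
        (fun f _ => mul_nonneg (by positivity) (hcnn f g)) (Finset.mem_univ g)
    have h1 : (M g : ℚ) ≤ (M g : ℚ) * c g g :=
      le_mul_of_one_le_right (by positivity) (hcf g)
    have h2 : -(y g) ≤ (M g : ℚ) := by
      have hyg : y g = ((mz g : ℤ) : ℚ) := by rw [hy, Pi.smul_apply, smul_eq_mul, hmz g]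
      have habs : ((M g : ℕ) : ℚ) = |((mz g : ℤ) : ℚ)| := by
        simp [hM, Nat.cast_natAbs]
      rw [hyg, habs]
      exact neg_le_abs _
    have : z g = y g + ∑ f, (M f : ℚ) * c f g := by
      simp [hz, smul_eq_mul]
    rw [this]
    linarith
  have hzint : ∀ g, ∃ m : ℕ, z g = m := by
    intro g
    choose cm hcm using fun f => hcint f g
    have hzq : z g = ((mz g + ∑ f, (M f : ℤ) * cm f : ℤ) : ℚ) := by
      have hyg : y g = ((mz g : ℤ) : ℚ) := by rw [hy, Pi.smul_apply, smul_eq_mul, hmz g]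
      have hzg : z g = y g + ∑ f, (M f : ℚ) * c f g := by simp [hz, smul_eq_mul]
      rw [hzg, hyg]
      push_cast
      congr 1
      exact Finset.sum_congr rfl (fun f _ => by rw [hcm f])
    have hge : 0 ≤ (mz g + ∑ f, (M f : ℤ) * cm f : ℤ) := by
      have := hznn g
      rw [hzq] at this
      exact_mod_cast this
    refine ⟨(mz g + ∑ f, (M f : ℤ) * cm f).toNat, ?_⟩
    rw [hzq]
    exact_mod_cast congrArg (fun z : ℤ => (z : ℚ)) (Int.toNat_of_nonneg hge).symm
  -- sum of z is a natural number
  choose zn hzn using hzint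
  have hzsum : ∑ g, z g = ((∑ g, zn g : ℕ) : ℚ) := by
    push_cast
    exact Finset.sum_congr rfl (fun g _ => hzn g)
  have hzmem : z ∈ G.loopSpace := decomp (∑ g, zn g) z (fun g => ⟨zn g, hzn g⟩) hbz hzsum
  have hcmem : ∀ f, c f ∈ G.loopSpace := by
    intro f
    choose cm hcm using fun g => hcint f g
    exact decomp (∑ g, cm g) (c f) (fun g => ⟨cm g, hcm g⟩) (hcb f)
      (by push_cast; exact Finset.sum_congr rfl (fun g _ => hcm g))
  have hymem : y ∈ G.loopSpace := by
    have : y = z - ∑ f, (M f : ℚ) • c f := by rw [hz]; ring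
    rw [this]
    exact Submodule.sub_mem _ hzmem
      (Submodule.sum_mem _ (fun f _ => Submodule.smul_mem _ _ (hcmem f)))
  have hNne : (N : ℚ) ≠ 0 := by positivity
  have : x = (N : ℚ)⁻¹ • y := by
    rw [hy, smul_smul, inv_mul_cancel₀ hNne, one_smul]
  rw [this]
  exact Submodule.smul_mem _ _ hymem

lemma loopSpace_le_ker : G.loopSpace ≤ LinearMap.ker G.bnd := by
  rw [loopSpace, Submodule.span_le]
  rintro v ⟨n, hn, e, he, rfl⟩
  rw [SetLike.mem_coe, LinearMap.mem_ker]
  exact bnd_loopVec he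

lemma loopSpace_eq_ker
    (cov : ∀ f : G.E, ∃ c : G.E → ℚ, (∀ g, ∃ m : ℕ, c g = m) ∧ G.bnd c = 0 ∧ 1 ≤ c f) :
    G.loopSpace = LinearMap.ker G.bnd :=
  le_antisymm loopSpace_le_ker (ker_le_loopSpace cov)

end Digraph'
namespace Digraph'

variable {G : Digraph'} {k : ℕ} [NeZero k] {e : ZMod k → G.E}

lemma tail_mem_loopVerts (i : ZMod k) : G.tail (e i) ∈ G.loopVerts e := ⟨i, rfl⟩

lemma tip_mem_loopVerts (he : G.IsEmbeddedLoop e) (i : ZMod k) :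
    G.tip (e i) ∈ G.loopVerts e := by
  rw [he.2.2 i]; exact ⟨i + 1, rfl⟩

lemma collapse_tip_eq_some {w : G.V} (hw : w ∉ G.loopVerts e) (g : (G.collapse e).E) :
    ((G.collapse e).tip g = some ⟨w, hw⟩) ↔ G.tip g.1 = w := by
  simp only [collapse]
  by_cases h : G.tip g.1 ∈ G.loopVerts e
  · rw [dif_pos h]
    simp only [false_iff, reduceCtorEq]
    exact fun hh => hw (hh ▸ h)
  · rw [dif_neg h]
    simp [Subtype.ext_iff]

lemma collapse_tail_eq_some {w : G.V} (hw : w ∉ G.loopVerts e) (g : (G.collapse e).E) :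
    ((G.collapse e).tail g = some ⟨w, hw⟩) ↔ G.tail g.1 = w := by
  simp only [collapse]
  by_cases h : G.tail g.1 ∈ G.loopVerts e
  · rw [dif_pos h]
    simp only [false_iff, reduceCtorEq]
    exact fun hh => hw (hh ▸ h)
  · rw [dif_neg h]
    simp [Subtype.ext_iff]

lemma collapse_tip_eq_none (g : (G.collapse e).E) :
    ((G.collapse e).tip g = none) ↔ G.tip g.1 ∈ G.loopVerts e := by
  simp only [collapse]
  by_cases h : G.tip g.1 ∈ G.loopVerts e
  · rw [dif_pos h]; simp [h]
  · rw [dif_neg h]; simp [h]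

lemma collapse_tail_eq_none (g : (G.collapse e).E) :
    ((G.collapse e).tail g = none) ↔ G.tail g.1 ∈ G.loopVerts e := by
  simp only [collapse]
  by_cases h : G.tail g.1 ∈ G.loopVerts e
  · rw [dif_pos h]; simp [h]
  · rw [dif_neg h]; simp [h]

lemma collapseMap_apply (x : G.E → ℚ) (g : (G.collapse e).E) :
    G.collapseMap e x g = x g.1 := rfl

lemma sum_collapse_edges (Φ : G.E → ℚ) (hΦ : ∀ f ∈ Set.range e, Φ f = 0) :
    ∑ g : (G.collapse e).E, Φ g.1 = ∑ f, Φ f := by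
  classical
  calc ∑ g : (G.collapse e).E, Φ g.1
      = ∑ g : {f : G.E // f ∉ Set.range e}, Φ g.1 :=
        Fintype.sum_bijective id Function.bijective_id _ _ (fun _ => rfl)
    _ = ∑ f ∈ Finset.univ.filter (fun f => f ∉ Set.range e), Φ f :=
        (Finset.sum_subtype _ (by simp) Φ).symm
    _ = ∑ f, Φ f := Finset.sum_filter_of_ne (fun f _ hne hmem => hne (hΦ f hmem))

lemma bnd_collapse_some (he : G.IsEmbeddedLoop e) (x : G.E → ℚ) {w : G.V}
    (hw : w ∉ G.loopVerts e) :
    (G.collapse e).bnd (G.collapseMap e x) (some ⟨w, hw⟩) = G.bnd x w := by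
  classical
  rw [bnd_apply (G.collapse e) (G.collapseMap e x) (some ⟨w, hw⟩), bnd_apply]
  have hterm : ∀ g : (G.collapse e).E,
      G.collapseMap e x g * ((if (G.collapse e).tip g = some ⟨w, hw⟩ then (1:ℚ) else 0)
        - (if (G.collapse e).tail g = some ⟨w, hw⟩ then 1 else 0))
      = x g.1 * ((if G.tip g.1 = w then (1:ℚ) else 0) - (if G.tail g.1 = w then 1 else 0)) := by
    intro g
    rw [collapseMap_apply]
    congr 1
    rw [if_congr (collapse_tip_eq_some hw g) rfl rfl,
      if_congr (collapse_tail_eq_some hw g) rfl rfl]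
  rw [Finset.sum_congr rfl (fun g _ => hterm g)]
  refine sum_collapse_edges
    (fun f => x f * ((if G.tip f = w then (1:ℚ) else 0) - (if G.tail f = w then 1 else 0))) ?_
  rintro f ⟨i, rfl⟩
  have h1 : G.tip (e i) ≠ w := fun h => hw (h ▸ tip_mem_loopVerts he i)
  have h2 : G.tail (e i) ≠ w := fun h => hw (h ▸ tail_mem_loopVerts i)
  simp [h1, h2]

lemma sum_ind_loopVerts (he : G.IsEmbeddedLoop e) (u : G.V) :
    ∑ i, (if u = G.tail (e i) then (1:ℚ) else 0) = if u ∈ G.loopVerts e then 1 else 0 := by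
  by_cases hu : u ∈ G.loopVerts e
  · obtain ⟨i0, hi0⟩ := hu
    rw [if_pos ⟨i0, hi0⟩]
    have hiff : ∀ i : ZMod k, (u = G.tail (e i)) ↔ i = i0 := by
      intro i
      constructor
      · intro h
        exact (he.2.1 (show G.tail (e i) = G.tail (e i0) from h.symm.trans hi0.symm)).symm ▸ rfl
      · rintro rfl; exact hi0.symm
    rw [Finset.sum_congr rfl (fun i _ => if_congr (hiff i) rfl rfl)]
    simp
  · rw [if_neg hu]
    exact Finset.sum_eq_zero fun i _ => if_neg (fun h => hu ⟨i, h.symm⟩)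

lemma bnd_collapse_none (he : G.IsEmbeddedLoop e) (x : G.E → ℚ) :
    (G.collapse e).bnd (G.collapseMap e x) none = ∑ i, G.bnd x (G.tail (e i)) := by
  classical
  have hrhs : ∑ i, G.bnd x (G.tail (e i))
      = ∑ f, x f * ((if G.tip f ∈ G.loopVerts e then (1:ℚ) else 0)
        - (if G.tail f ∈ G.loopVerts e then 1 else 0)) := by
    simp only [bnd_apply]
    rw [Finset.sum_comm]
    refine Finset.sum_congr rfl (fun f _ => ?_)
    rw [← Finset.mul_sum, Finset.sum_sub_distrib, sum_ind_loopVerts he, sum_ind_loopVerts he]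
  rw [hrhs, bnd_apply (G.collapse e) (G.collapseMap e x) none]
  have hterm : ∀ g : (G.collapse e).E,
      G.collapseMap e x g * ((if (G.collapse e).tip g = none then (1:ℚ) else 0)
        - (if (G.collapse e).tail g = none then 1 else 0))
      = x g.1 * ((if G.tip g.1 ∈ G.loopVerts e then (1:ℚ) else 0)
        - (if G.tail g.1 ∈ G.loopVerts e then 1 else 0)) := by
    intro g
    rw [collapseMap_apply]
    congr 1
    rw [if_congr (collapse_tip_eq_none g) rfl rfl, if_congr (collapse_tail_eq_none g) rfl rfl]
  rw [Finset.sum_congr rfl (fun g _ => hterm g)]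
  refine sum_collapse_edges
    (fun f => x f * ((if G.tip f ∈ G.loopVerts e then (1:ℚ) else 0)
      - (if G.tail f ∈ G.loopVerts e then 1 else 0))) ?_
  rintro f ⟨i, rfl⟩
  rw [if_pos (tip_mem_loopVerts he i), if_pos (tail_mem_loopVerts i)]
  ring

lemma bnd_collapse (he : G.IsEmbeddedLoop e) (x : G.E → ℚ) (hb : G.bnd x = 0) :
    (G.collapse e).bnd (G.collapseMap e x) = 0 := by
  funext v'
  match v' with
  | some ⟨w, hw⟩ => rw [bnd_collapse_some he x hw, hb]; rfl
  | none =>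
    rw [bnd_collapse_none he x]
    simp [hb]
    rfl

end Digraph'
namespace Digraph'

variable {G : Digraph'} {k : ℕ} [NeZero k] {e : ZMod k → G.E}

lemma bnd_loopcomb (he : G.IsEmbeddedLoop e) (c : ZMod k → ℚ) (i0 : ZMod k) :
    G.bnd (∑ i, Pi.single (e i) (c i)) (G.tail (e i0)) = c (i0 - 1) - c i0 := by
  classical
  rw [map_sum, Finset.sum_apply]
  have hterm : ∀ i : ZMod k, G.bnd (Pi.single (e i) (c i)) (G.tail (e i0))
      = c i * ((if i = i0 - 1 then (1:ℚ) else 0) - (if i = i0 then 1 else 0)) := by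
    intro i
    rw [G.bnd_single]
    congr 1
    congr 1
    · refine if_congr ?_ rfl rfl
      rw [he.2.2 i]
      constructor
      · intro h
        exact eq_sub_of_add_eq (he.2.1 h)
      · intro h
        rw [h, sub_add_cancel]
    · refine if_congr ?_ rfl rfl
      exact ⟨fun h => he.2.1 h, fun h => by rw [h]⟩
  rw [Finset.sum_congr rfl (fun i _ => hterm i)]
  have hs : ∀ a : ZMod k, ∑ i, c i * (if i = a then (1:ℚ) else 0) = c a := by
    intro a
    rw [Finset.sum_congr rfl (fun i _ => by rw [mul_ite, mul_one, mul_zero]),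
      Finset.sum_ite_eq']
    simp
  simp only [mul_sub]
  rw [Finset.sum_sub_distrib, hs (i0 - 1), hs i0]

lemma bnd_loopcomb_off (he : G.IsEmbeddedLoop e) (c : ZMod k → ℚ) {v : G.V}
    (hv : v ∉ G.loopVerts e) :
    G.bnd (∑ i, Pi.single (e i) (c i)) v = 0 := by
  rw [map_sum, Finset.sum_apply]
  refine Finset.sum_eq_zero fun i _ => ?_
  rw [G.bnd_single]
  have h1 : G.tip (e i) ≠ v := fun h => hv (h ▸ tip_mem_loopVerts he i)
  have h2 : G.tail (e i) ≠ v := fun h => hv (h ▸ tail_mem_loopVerts i)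
  rw [if_neg h1, if_neg h2]
  ring

lemma exists_antiderivative (b : ZMod k → ℚ) (hb : ∑ i, b i = 0) :
    ∃ c : ZMod k → ℚ, ∀ i, c i - c (i - 1) = b i := by
  classical
  have hk : 1 ≤ k := Nat.pos_of_ne_zero (NeZero.ne k)
  refine ⟨fun i => ∑ j ∈ Finset.univ.filter (fun j : ZMod k => j.val ≤ i.val), b j, ?_⟩
  intro i
  show (∑ j ∈ Finset.univ.filter (fun j : ZMod k => j.val ≤ i.val), b j)
    - (∑ j ∈ Finset.univ.filter (fun j : ZMod k => j.val ≤ (i - 1).val), b j) = b i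
  by_cases hi : i = 0
  · subst hi
    have h1 : Finset.univ.filter (fun j : ZMod k => j.val ≤ (0:ZMod k).val) = {0} := by
      ext j
      simp only [Finset.mem_filter, Finset.mem_univ, true_and, Finset.mem_singleton,
        ZMod.val_zero, Nat.le_zero]
      exact ⟨fun h => zmod_val_inj (by rw [h, ZMod.val_zero]), fun h => by rw [h, ZMod.val_zero]⟩
    have hneg : (0 - 1 : ZMod k).val = k - 1 := by
      have h2 : ((k - 1 : ℕ) : ZMod k) = 0 - 1 := by
        rw [Nat.cast_sub hk, ZMod.natCast_self, Nat.cast_one, zero_sub]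
      rw [← h2, ZMod.val_cast_of_lt (by omega)]
    have h3 : Finset.univ.filter (fun j : ZMod k => j.val ≤ (0 - 1 : ZMod k).val)
        = Finset.univ := by
      ext j
      simp only [Finset.mem_filter, Finset.mem_univ, true_and, iff_true, hneg]
      have := ZMod.val_lt j
      omega
    rw [h1, h3, Finset.sum_singleton, hb, sub_zero]
  · have hvpos : 1 ≤ i.val :=
      Nat.pos_of_ne_zero (fun h => hi (zmod_val_inj (by rw [h, ZMod.val_zero])))
    have hsub : (i - 1).val = i.val - 1 := by
      have h1 : ((i.val - 1 : ℕ) : ZMod k) = i - 1 := by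
        rw [Nat.cast_sub hvpos, Nat.cast_one, ZMod.natCast_rightInverse i]
      rw [← h1, ZMod.val_cast_of_lt (by have := ZMod.val_lt i; omega)]
    have hins : Finset.univ.filter (fun j : ZMod k => j.val ≤ i.val)
        = insert i (Finset.univ.filter (fun j : ZMod k => j.val ≤ i.val - 1)) := by
      ext j
      simp only [Finset.mem_filter, Finset.mem_univ, true_and, Finset.mem_insert]
      constructor
      · intro h
        by_cases hj : j.val = i.val
        · exact Or.inl (zmod_val_inj hj)
        · exact Or.inr (by omega)
      · rintro (rfl | h)
        · exact le_refl _
        · omega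
    have hni : i ∉ Finset.univ.filter (fun j : ZMod k => j.val ≤ i.val - 1) := by
      simp only [Finset.mem_filter, Finset.mem_univ, true_and]
      omega
    rw [hins, Finset.sum_insert hni, hsub]
    ring

lemma lift_circulation (he : G.IsEmbeddedLoop e) (y : (G.collapse e).E → ℚ)
    (hy : (G.collapse e).bnd y = 0) :
    ∃ x : G.E → ℚ, G.bnd x = 0 ∧ G.collapseMap e x = y := by
  classical
  set x₀ : G.E → ℚ := fun f => if h : f ∈ Set.range e then 0 else y ⟨f, h⟩ with hx0
  have hπ0 : G.collapseMap e x₀ = y := by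
    funext g
    rw [collapseMap_apply, hx0]
    simp only
    rw [dif_neg g.2]
    exact congrArg y (Subtype.ext rfl)
  have hbsum : ∑ i, G.bnd x₀ (G.tail (e i)) = 0 := by
    rw [← bnd_collapse_none he x₀, hπ0, hy]
    rfl
  obtain ⟨c, hc⟩ := exists_antiderivative (fun i => G.bnd x₀ (G.tail (e i))) hbsum
  refine ⟨x₀ + ∑ i, Pi.single (e i) (c i), ?_, ?_⟩
  · funext v
    rw [map_add, Pi.add_apply, Pi.zero_apply]
    by_cases hv : v ∈ G.loopVerts e
    · obtain ⟨i0, hi0⟩ := hv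
      have hi0' : G.tail (e i0) = v := hi0
      rw [← hi0', bnd_loopcomb he c i0]
      have h1 := hc i0
      linarith
    · rw [bnd_loopcomb_off he c hv]
      have h1 : G.bnd x₀ v = 0 := by
        rw [← bnd_collapse_some he x₀ hv, hπ0, hy]
        rfl
      rw [h1, add_zero]
  · rw [map_add, hπ0]
    have hz : G.collapseMap e (∑ i, Pi.single (e i) (c i)) = 0 := by
      funext g
      rw [collapseMap_apply, Finset.sum_apply]
      refine Finset.sum_eq_zero fun i _ => ?_
      rw [Pi.single_apply]
      exact if_neg (fun h => g.2 ⟨i, h.symm⟩)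
    rw [hz, add_zero]

lemma ker_collapse (he : G.IsEmbeddedLoop e) (x : G.E → ℚ) (hb : G.bnd x = 0)
    (hπ : G.collapseMap e x = 0) : x ∈ Submodule.span ℚ {G.loopVec e} := by
  classical
  have hoff : ∀ f (hf : f ∉ Set.range e), x f = 0 := by
    intro f hf
    exact congrFun hπ (show (G.collapse e).E from ⟨f, hf⟩)
  set c : ZMod k → ℚ := fun i => x (e i) with hcdef
  have hxz : x = ∑ i, Pi.single (e i) (c i) := by
    funext f
    rw [Finset.sum_apply]
    by_cases hf : f ∈ Set.range e
    · obtain ⟨i0, rfl⟩ := hf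
      rw [Finset.sum_eq_single i0]
      · rw [Pi.single_eq_same]
      · intro j _ hj
        rw [Pi.single_apply]
        exact if_neg (fun h => hj (he.1 h).symm)
      · simp
    · rw [hoff f hf]
      symm
      refine Finset.sum_eq_zero fun i _ => ?_
      rw [Pi.single_apply]
      exact if_neg (fun h => hf ⟨i, h.symm⟩)
  have hstep : ∀ i0 : ZMod k, c (i0 - 1) - c i0 = 0 := by
    intro i0
    rw [← bnd_loopcomb he c i0, ← hxz, hb]
    rfl
  have hconst : ∀ i : ZMod k, c i = c 0 := by
    have hnat : ∀ m : ℕ, c ((m : ℕ) : ZMod k) = c 0 := by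
      intro m
      induction m with
      | zero => norm_num
      | succ m ih =>
        have h1 := hstep ((m + 1 : ℕ) : ZMod k)
        push_cast at h1 ⊢
        rw [add_sub_cancel_right] at h1
        linarith
    intro i
    have := hnat i.val
    rwa [ZMod.natCast_rightInverse i] at this
  rw [Submodule.mem_span_singleton]
  refine ⟨c 0, funext fun f => ?_⟩
  rw [Pi.smul_apply, smul_eq_mul]
  by_cases hf : f ∈ Set.range e
  · obtain ⟨i0, rfl⟩ := hf
    rw [loopVec, Set.indicator_of_mem (Set.mem_range_self i0), mul_one]
    exact (hconst i0).symm
  · rw [loopVec, Set.indicator_of_notMem hf, mul_zero]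
    exact (hoff f hf).symm

end Digraph'

/-- Collapsing an embedded loop `ℓ` of a strongly connected digraph `Γ` gives a short
exact sequence `0 → ℚ·ℓ → L(Γ) → L(Γ') → 0` of loop spaces: the induced map sends
`L(Γ)` onto `L(Γ')`, its kernel inside `L(Γ)` is spanned by the class of `ℓ` (and `ℓ`
does lie in `L(Γ)`); in particular `dim L(Γ) = dim L(Γ') + 1`. -/
theorem collapse_loopSpace_exact (G : Digraph') (hG : G.StronglyConnected)
    {k : ℕ} [NeZero k] (e : ZMod k → G.E) (he : G.IsEmbeddedLoop e) :
    G.loopVec e ∈ G.loopSpace ∧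
      Submodule.map (G.collapseMap e) G.loopSpace = (G.collapse e).loopSpace ∧
      G.loopSpace ⊓ LinearMap.ker (G.collapseMap e) = Submodule.span ℚ {G.loopVec e} ∧
      Module.finrank ℚ G.loopSpace = Module.finrank ℚ (G.collapse e).loopSpace + 1 := by
  classical
  have covG := Digraph'.cov_of_sc hG
  have hLG : G.loopSpace = LinearMap.ker G.bnd := Digraph'.loopSpace_eq_ker covG
  have covG' : ∀ g : (G.collapse e).E, ∃ c : (G.collapse e).E → ℚ,
      (∀ g', ∃ m : ℕ, c g' = m) ∧ (G.collapse e).bnd c = 0 ∧ 1 ≤ c g := by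
    intro g
    obtain ⟨c, hcint, hcb, hcf⟩ := covG g.1
    exact ⟨G.collapseMap e c, fun g' => hcint g'.1, Digraph'.bnd_collapse he c hcb, hcf⟩
  have hLG' : (G.collapse e).loopSpace = LinearMap.ker (G.collapse e).bnd :=
    Digraph'.loopSpace_eq_ker covG'
  have h1 : G.loopVec e ∈ G.loopSpace := Digraph'.loopVec_mem k e he
  have hπℓ : G.collapseMap e (G.loopVec e) = 0 := by
    funext g
    rw [Digraph'.collapseMap_apply, Pi.zero_apply]
    exact Set.indicator_of_notMem g.2 _
  have h2 : Submodule.map (G.collapseMap e) G.loopSpace = (G.collapse e).loopSpace := by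
    apply le_antisymm
    · rintro _ ⟨x, hx, rfl⟩
      rw [hLG']
      rw [LinearMap.mem_ker]
      rw [hLG] at hx
      simp only [SetLike.mem_coe, LinearMap.mem_ker] at hx
      exact Digraph'.bnd_collapse he x hx
    · intro y hy
      rw [hLG', LinearMap.mem_ker] at hy
      obtain ⟨x, hbx, hπx⟩ := Digraph'.lift_circulation he y hy
      exact ⟨x, by rw [hLG]; simpa [LinearMap.mem_ker] using hbx, hπx⟩
  have h3 : G.loopSpace ⊓ LinearMap.ker (G.collapseMap e) = Submodule.span ℚ {G.loopVec e} := by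
    apply le_antisymm
    · rintro x ⟨hx1, hx2⟩
      rw [hLG] at hx1
      simp only [SetLike.mem_coe, LinearMap.mem_ker] at hx1 hx2
      exact Digraph'.ker_collapse he x hx1 hx2
    · rw [Submodule.span_le, Set.singleton_subset_iff]
      exact ⟨h1, hπℓ⟩
  refine ⟨h1, h2, h3, ?_⟩
  have hnz : G.loopVec e ≠ 0 := by
    intro h
    have h0 := congrFun h (e 0)
    rw [Pi.zero_apply, Digraph'.loopVec, Set.indicator_of_mem (Set.mem_range_self 0)] at h0
    norm_num at h0
  set φ := (G.collapseMap e).domRestrict G.loopSpace with hφ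
  have hrank := LinearMap.finrank_range_add_finrank_ker φ
  have hrange : LinearMap.range φ = (G.collapse e).loopSpace := by
    rw [hφ, LinearMap.range_domRestrict, h2]
  have hkereq : LinearMap.ker φ
      = Submodule.comap G.loopSpace.subtype
          (G.loopSpace ⊓ LinearMap.ker (G.collapseMap e)) := by
    ext x
    simp only [hφ, LinearMap.mem_ker, LinearMap.domRestrict_apply, Submodule.mem_comap,
      Submodule.subtype_apply, Submodule.mem_inf]
    exact ⟨fun h => ⟨x.2, h⟩, fun h => h.2⟩
  have hkerfin : Module.finrank ℚ (LinearMap.ker φ) = 1 := by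
    rw [hkereq]
    rw [(Submodule.comapSubtypeEquivOfLe inf_le_left).finrank_eq, h3,
      finrank_span_singleton hnz]
  rw [hrange, hkerfin] at hrank
  omega
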